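/- Point 2 (second part) of the main lemma: under the contraction condition, for each t ∈ {2,…,n} the martingale difference satisfies |d_t| ≤ K_{n−t}(ρ) H_{t,ε}(X_{t−1}, ε_t) almost surely, where H_{t,ε}(x, y) = ∫ d(F_t(x, y), F_t(x, y')) P_ε(dy'). -/

import Mathlib

open MeasureTheory ProbabilityTheory Finset

/-- `K_t(ρ) = (1 - ρ^(t+1))/(1 - ρ)`. -/
noncomputable def Kgeom (ρ : ℝ) (t : ℕ) : ℝ := (1 - ρ ^ (t + 1)) / (1 - ρ)

/-- Backward recursion defining the conditional expectation functionals: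
`gAux Pε F n f k = g_{n-k}`, i.e. `gAux _ _ _ _ 0 = g_n = f` and
`g_{t-1}(x) = ∫ g_t(x_1,…,x_{t-1}, F_t(x_{t-1}, y)) Pε(dy)`.
For the Markov chain `X_t = F_t(X_{t-1}, ε_t)`, `gAux Pε F n f (n - t)` applied to
`(X_1,…,X_t,…)` is a version of `E[f(X_1,…,X_n) | X_1,…,X_t]`; in particular, for `2 ≤ t`
the martingale difference `d_t = g_t(X_1,…,X_t) - g_{t-1}(X_1,…,X_{t-1})` equals
`gAux Pε F n f (n - t) (X·) - gAux Pε F n f (n - (t-1)) (X·)`. -/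
noncomputable def gAux {𝓧 𝓨 : Type*} [MeasurableSpace 𝓨] (Pε : Measure 𝓨)
    (F : ℕ → 𝓧 → 𝓨 → 𝓧) (n : ℕ) (f : (ℕ → 𝓧) → ℝ) : ℕ → (ℕ → 𝓧) → ℝ
  | 0 => f
  | (k + 1) => fun x =>
      ∫ y, gAux Pε F n f k (Function.update x (n - k) (F (n - k) (x (n - k - 1)) y)) ∂Pε

section Aux

variable {𝓧 𝓨 : Type*} [MeasurableSpace 𝓧] [MeasurableSpace 𝓨]

lemma Kgeom_nonneg {ρ : ℝ} (hρ0 : 0 ≤ ρ) (hρ1 : ρ < 1) (k : ℕ) : 0 ≤ Kgeom ρ k := by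
  have h1 : ρ ^ (k + 1) ≤ 1 := pow_le_one₀ hρ0 hρ1.le
  exact div_nonneg (by linarith) (by linarith)

lemma Kgeom_zero {ρ : ℝ} (hρ1 : ρ < 1) : Kgeom ρ 0 = 1 := by
  rw [Kgeom, pow_one, div_self (by linarith : (1:ℝ) - ρ ≠ 0)]

lemma Kgeom_succ {ρ : ℝ} (hρ1 : ρ < 1) (k : ℕ) : Kgeom ρ (k + 1) = 1 + ρ * Kgeom ρ k := by
  have h : (1:ℝ) - ρ ≠ 0 := by linarith
  rw [Kgeom, Kgeom]
  field_simp
  ring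

lemma sum_Icc_one_split (g : ℕ → ℝ) (m : ℕ) (hm : 1 ≤ m) :
    ∑ s ∈ Icc 1 m, g s = (∑ s ∈ Icc 1 (m - 1), g s) + g m := by
  have h : Icc 1 m = insert m (Icc 1 (m - 1)) := by
    ext a; simp only [Finset.mem_Icc, Finset.mem_insert]; omega
  rw [h, Finset.sum_insert (by simp only [Finset.mem_Icc]; omega)]
  ring

lemma gAux_measurable (Pε : Measure 𝓨) [SFinite Pε]
    (F : ℕ → 𝓧 → 𝓨 → 𝓧) (hmF : ∀ t, Measurable (Function.uncurry (F t)))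
    (n : ℕ) (f : (ℕ → 𝓧) → ℝ) (hmf : Measurable f) :
    ∀ k, Measurable (gAux Pε F n f k) := by
  intro k
  induction k with
  | zero => exact hmf
  | succ k ih =>
    have hΦ : Measurable (fun p : (ℕ → 𝓧) × 𝓨 =>
        Function.update p.1 (n - k) (F (n - k) (p.1 (n - k - 1)) p.2)) :=
      measurable_update'.comp
        (measurable_fst.prodMk (show Measurable fun p : (ℕ → 𝓧) × 𝓨 =>
            F (n - k) (p.1 (n - k - 1)) p.2 from (hmF (n - k)).comp (f := fun p : (ℕ → 𝓧) × 𝓨 => (p.1 (n - k - 1), p.2))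
          (((measurable_pi_apply _).comp measurable_fst).prodMk measurable_snd)))
    rw [gAux]
    exact (StronglyMeasurable.integral_prod_right'
      ((ih.comp hΦ).stronglyMeasurable)).measurable

variable [MetricSpace 𝓧]

lemma gAux_lip (Pε : Measure 𝓨) [IsProbabilityMeasure Pε]
    (F : ℕ → 𝓧 → 𝓨 → 𝓧) (hmF : ∀ t, Measurable (Function.uncurry (F t)))
    (ρ : ℝ) (hρ0 : 0 ≤ ρ) (hρ1 : ρ < 1)
    (hcontract : ∀ t x x', ∫ y, dist (F t x y) (F t x' y) ∂Pε ≤ ρ * dist x x')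
    (hintc : ∀ t x x', Integrable (fun y => dist (F t x y) (F t x' y)) Pε)
    (hintH : ∀ t x y₀, Integrable (fun y => dist (F t x y) (F t x y₀)) Pε)
    (n : ℕ) (f : (ℕ → 𝓧) → ℝ) (hmf : Measurable f)
    (hlip : ∀ x x', |f x - f x'| ≤ ∑ t ∈ Icc 1 n, dist (x t) (x' t)) :
    ∀ k, k < n → ∀ x x', |gAux Pε F n f k x - gAux Pε F n f k x'| ≤
      (∑ s ∈ Icc 1 (n - k - 1), dist (x s) (x' s)) +
        Kgeom ρ k * dist (x (n - k)) (x' (n - k)) := by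
  intro k
  induction k with
  | zero =>
    intro hn x x'
    rw [Kgeom_zero hρ1, one_mul]
    have h := hlip x x'
    rw [sum_Icc_one_split (fun s => dist (x s) (x' s)) n (by omega)] at h
    simpa [gAux] using h
  | succ k ih =>
    intro hk x x'
    have hkn : k < n := by omega
    have hKnn := Kgeom_nonneg hρ0 hρ1 k
    set j := n - k with hj
    have hj2 : 2 ≤ j := by omega
    -- integrability of the inner functions
    have hY : Nonempty 𝓨 := by
      by_contra h
      rw [not_nonempty_iff] at h
      have h1 : Pε Set.univ = 1 := measure_univ
      rw [Set.univ_eq_empty_iff.mpr h] at h1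
      simp at h1
    obtain ⟨y₀⟩ := hY
    have hint : ∀ (z : ℕ → 𝓧) (d : 𝓧),
        Integrable (fun y => gAux Pε F n f k (Function.update z j (F j d y))) Pε := by
      intro z d
      have hmeas : Measurable fun y => gAux Pε F n f k (Function.update z j (F j d y)) := by
        exact (gAux_measurable Pε F hmF n f hmf k).comp
          ((measurable_update z).comp
            ((hmF j).comp (measurable_const.prodMk measurable_id)))
      refine Integrable.mono'
        ((integrable_const |gAux Pε F n f k (Function.update z j (F j d y₀))|).add
          ((hintH j d y₀).const_mul (Kgeom ρ k))) hmeas.aestronglyMeasurable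
        (Filter.Eventually.of_forall fun y => ?_)
      have hb := ih hkn (Function.update z j (F j d y)) (Function.update z j (F j d y₀))
      have hzero : ∑ s ∈ Icc 1 (n - k - 1),
          dist (Function.update z j (F j d y) s) (Function.update z j (F j d y₀) s) = 0 := by
        refine Finset.sum_eq_zero fun s hs => ?_
        rw [Finset.mem_Icc] at hs
        have hsj : s ≠ j := by omega
        rw [Function.update_of_ne hsj, Function.update_of_ne hsj, dist_self]
      rw [hzero, zero_add, Function.update_self, Function.update_self] at hb
      have habs := abs_sub_abs_le_abs_sub
        (gAux Pε F n f k (Function.update z j (F j d y)))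
        (gAux Pε F n f k (Function.update z j (F j d y₀)))
      simp only [Real.norm_eq_abs, Pi.add_apply]
      linarith
    -- unfold gAux at level k+1
    rw [show gAux Pε F n f (k + 1) x = ∫ y,
          gAux Pε F n f k (Function.update x (n - k) (F (n - k) (x (n - k - 1)) y)) ∂Pε
        from rfl,
        show gAux Pε F n f (k + 1) x' = ∫ y,
          gAux Pε F n f k (Function.update x' (n - k) (F (n - k) (x' (n - k - 1)) y)) ∂Pε
        from rfl]
    rw [← integral_sub (hint x (x (n - k - 1))) (hint x' (x' (n - k - 1)))]
    set C : ℝ := ∑ s ∈ Icc 1 (n - k - 1), dist (x s) (x' s) with hC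
    have hptwise : ∀ y,
        |gAux Pε F n f k (Function.update x j (F j (x (j - 1)) y))
          - gAux Pε F n f k (Function.update x' j (F j (x' (j - 1)) y))|
        ≤ C + Kgeom ρ k * dist (F j (x (j - 1)) y) (F j (x' (j - 1)) y) := by
      intro y
      have hb := ih hkn (Function.update x j (F j (x (j - 1)) y))
        (Function.update x' j (F j (x' (j - 1)) y))
      have hsum : ∑ s ∈ Icc 1 (n - k - 1),
          dist (Function.update x j (F j (x (j - 1)) y) s)
            (Function.update x' j (F j (x' (j - 1)) y) s) = C := by
        refine Finset.sum_congr rfl fun s hs => ?_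
        rw [Finset.mem_Icc] at hs
        have hsj : s ≠ j := by omega
        rw [Function.update_of_ne hsj, Function.update_of_ne hsj]
      rw [hsum, Function.update_self, Function.update_self] at hb
      exact hb
    have hintg : Integrable (fun y : 𝓨 =>
        C + Kgeom ρ k * dist (F j (x (j - 1)) y) (F j (x' (j - 1)) y)) Pε :=
      (integrable_const C).add ((hintc j (x (j - 1)) (x' (j - 1))).const_mul _)
    calc |∫ y, (gAux Pε F n f k (Function.update x j (F j (x (j - 1)) y))
            - gAux Pε F n f k (Function.update x' j (F j (x' (j - 1)) y))) ∂Pε|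
        ≤ ∫ y, |gAux Pε F n f k (Function.update x j (F j (x (j - 1)) y))
            - gAux Pε F n f k (Function.update x' j (F j (x' (j - 1)) y))| ∂Pε :=
          by
            simpa [Real.norm_eq_abs] using norm_integral_le_integral_norm
              (fun y => gAux Pε F n f k (Function.update x j (F j (x (j - 1)) y))
                - gAux Pε F n f k (Function.update x' j (F j (x' (j - 1)) y)))
      _ ≤ ∫ y, (C + Kgeom ρ k * dist (F j (x (j - 1)) y) (F j (x' (j - 1)) y)) ∂Pε := by
          refine integral_mono ?_ hintg hptwise
          exact ((hint x (x (n - k - 1))).sub (hint x' (x' (n - k - 1)))).abs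
      _ = C + Kgeom ρ k * ∫ y, dist (F j (x (j - 1)) y) (F j (x' (j - 1)) y) ∂Pε := by
          rw [integral_add (integrable_const C)
            ((hintc j (x (j - 1)) (x' (j - 1))).const_mul _),
            integral_const, integral_const_mul]
          simp
      _ ≤ C + Kgeom ρ k * (ρ * dist (x (j - 1)) (x' (j - 1))) := by
          have := hcontract j (x (j - 1)) (x' (j - 1))
          nlinarith
      _ ≤ (∑ s ∈ Icc 1 (n - (k + 1) - 1), dist (x s) (x' s)) +
          Kgeom ρ (k + 1) * dist (x (n - (k + 1))) (x' (n - (k + 1))) := by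
          have e1 : n - (k + 1) = j - 1 := by omega
          have e2 : n - k - 1 = j - 1 := by omega
          rw [e1, Kgeom_succ hρ1, hC, e2,
            sum_Icc_one_split (fun s => dist (x s) (x' s)) (j - 1) (by omega)]
          have e3 : j - 1 - 1 = n - (k + 1) - 1 := by omega
          rw [e3]
          ring_nf
          nlinarith [@dist_nonneg _ _ (x (j - 1)) (x' (j - 1))]

lemma gAux_int (Pε : Measure 𝓨) [IsProbabilityMeasure Pε]
    (F : ℕ → 𝓧 → 𝓨 → 𝓧) (hmF : ∀ t, Measurable (Function.uncurry (F t)))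
    (ρ : ℝ) (hρ0 : 0 ≤ ρ) (hρ1 : ρ < 1)
    (hcontract : ∀ t x x', ∫ y, dist (F t x y) (F t x' y) ∂Pε ≤ ρ * dist x x')
    (hintc : ∀ t x x', Integrable (fun y => dist (F t x y) (F t x' y)) Pε)
    (hintH : ∀ t x y₀, Integrable (fun y => dist (F t x y) (F t x y₀)) Pε)
    (n : ℕ) (f : (ℕ → 𝓧) → ℝ) (hmf : Measurable f)
    (hlip : ∀ x x', |f x - f x'| ≤ ∑ t ∈ Icc 1 n, dist (x t) (x' t))
    (k : ℕ) (hkn : k < n) (z : ℕ → 𝓧) (d : 𝓧) :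
    Integrable (fun y => gAux Pε F n f k (Function.update z (n - k) (F (n - k) d y))) Pε := by
  have hY : Nonempty 𝓨 := by
    by_contra h
    rw [not_nonempty_iff] at h
    have h1 : Pε Set.univ = 1 := measure_univ
    rw [Set.univ_eq_empty_iff.mpr h] at h1
    simp at h1
  obtain ⟨y₀⟩ := hY
  set j := n - k with hj
  have hmeas : Measurable fun y => gAux Pε F n f k (Function.update z j (F j d y)) :=
    (gAux_measurable Pε F hmF n f hmf k).comp
      ((measurable_update z).comp
        ((hmF j).comp (measurable_const.prodMk measurable_id)))
  refine Integrable.mono'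
    ((integrable_const |gAux Pε F n f k (Function.update z j (F j d y₀))|).add
      ((hintH j d y₀).const_mul (Kgeom ρ k))) hmeas.aestronglyMeasurable
    (Filter.Eventually.of_forall fun y => ?_)
  have hb := gAux_lip Pε F hmF ρ hρ0 hρ1 hcontract hintc hintH n f hmf hlip k hkn
    (Function.update z j (F j d y)) (Function.update z j (F j d y₀))
  have hzero : ∑ s ∈ Icc 1 (n - k - 1),
      dist (Function.update z j (F j d y) s) (Function.update z j (F j d y₀) s) = 0 := by
    refine Finset.sum_eq_zero fun s hs => ?_
    rw [Finset.mem_Icc] at hs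
    have hsj : s ≠ j := by omega
    rw [Function.update_of_ne hsj, Function.update_of_ne hsj, dist_self]
  rw [hzero, zero_add, Function.update_self, Function.update_self] at hb
  have habs := abs_sub_abs_le_abs_sub
    (gAux Pε F n f k (Function.update z j (F j d y)))
    (gAux Pε F n f k (Function.update z j (F j d y₀)))
  simp only [Real.norm_eq_abs, Pi.add_apply]
  linarith

end Aux

/-- Point 2 (second part) of the main lemma: for `t ∈ {2,…,n}`, almost surely
`|d_t| ≤ K_{n-t}(ρ) H_{t,ε}(X_{t-1}, ε_t)` where
`H_{t,ε}(x,y) = ∫ d(F_t(x,y), F_t(x,y')) P_ε(dy')`. -/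
theorem martingale_difference_bound
    {Ω : Type*} [MeasurableSpace Ω] (μ : Measure Ω) [IsProbabilityMeasure μ]
    {𝓧 : Type*} [MetricSpace 𝓧] [CompleteSpace 𝓧] [TopologicalSpace.SeparableSpace 𝓧]
    [MeasurableSpace 𝓧] [BorelSpace 𝓧]
    {𝓨 : Type*} [MetricSpace 𝓨] [CompleteSpace 𝓨] [TopologicalSpace.SeparableSpace 𝓨]
    [MeasurableSpace 𝓨] [BorelSpace 𝓨]
    (X : ℕ → Ω → 𝓧) (ε : ℕ → Ω → 𝓨) (Pε : Measure 𝓨) [IsProbabilityMeasure Pε]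
    (hmX1 : Measurable (X 1)) (hmε : ∀ t, Measurable (ε t))
    (hlaw : ∀ t, 2 ≤ t → μ.map (ε t) = Pε)
    (hiid : iIndepFun
      (fun t : {t : ℕ // 2 ≤ t} => ε t.1) μ)
    (hindep : IndepFun (X 1) (fun ω => fun t : {t : ℕ // 2 ≤ t} => ε t.1 ω) μ)
    (F : ℕ → 𝓧 → 𝓨 → 𝓧) (hmF : ∀ t, Measurable (Function.uncurry (F t)))
    (hchain : ∀ t, 2 ≤ t → ∀ ω, X t ω = F t (X (t - 1) ω) (ε t ω))
    (ρ : ℝ) (hρ0 : 0 ≤ ρ) (hρ1 : ρ < 1)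
    (hcontract : ∀ t x x', ∫ y, dist (F t x y) (F t x' y) ∂Pε ≤ ρ * dist x x')
    (hintc : ∀ t x x', Integrable (fun y => dist (F t x y) (F t x' y)) Pε)
    (hintH : ∀ t x y₀, Integrable (fun y => dist (F t x y) (F t x y₀)) Pε)
    (n : ℕ) (hn : 1 ≤ n)
    (f : (ℕ → 𝓧) → ℝ) (hmf : Measurable f)
    (hlip : ∀ x x', |f x - f x'| ≤ ∑ t ∈ Icc 1 n, dist (x t) (x' t)) :
    ∀ t, 2 ≤ t → t ≤ n → ∀ᵐ ω ∂μ,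
      |gAux Pε F n f (n - t) (fun i => X i ω) -
          gAux Pε F n f (n - (t - 1)) (fun i => X i ω)| ≤
        Kgeom ρ (n - t) *
          ∫ y', dist (F t (X (t - 1) ω) (ε t ω)) (F t (X (t - 1) ω) y') ∂Pε := by
  intro t ht2 htn
  refine Filter.Eventually.of_forall fun ω => ?_
  set k := n - t with hk
  have hkn : k < n := by omega
  have hnk : n - k = t := by omega
  have ht1 : n - (t - 1) = k + 1 := by omega
  rw [ht1]
  set x : ℕ → 𝓧 := fun i => X i ω with hx
  set c := X (t - 1) ω with hc
  set e := ε t ω with he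
  have hxt1 : x (t - 1) = c := rfl
  have hxt : x t = F t c e := hchain t ht2 ω
  have hunf : gAux Pε F n f (k + 1) x
      = ∫ y, gAux Pε F n f k (Function.update x t (F t c y)) ∂Pε := by
    rw [show gAux Pε F n f (k + 1) x = ∫ y, gAux Pε F n f k
        (Function.update x (n - k) (F (n - k) (x (n - k - 1)) y)) ∂Pε from rfl, hnk]
  have hB : Integrable (fun y => gAux Pε F n f k (Function.update x t (F t c y))) Pε := by
    have h := gAux_int Pε F hmF ρ hρ0 hρ1 hcontract hintc hintH n f hmf hlip k hkn x c
    rwa [hnk] at h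
  have hd : Integrable (fun y => dist (F t c e) (F t c y)) Pε := by
    simpa [dist_comm] using hintH t c e
  have hsplit : gAux Pε F n f k x - ∫ y, gAux Pε F n f k (Function.update x t (F t c y)) ∂Pε
      = ∫ y, (gAux Pε F n f k x - gAux Pε F n f k (Function.update x t (F t c y))) ∂Pε := by
    rw [integral_sub (integrable_const _) hB, integral_const]
    simp
  have hptwise : ∀ y, |gAux Pε F n f k x - gAux Pε F n f k (Function.update x t (F t c y))|
      ≤ Kgeom ρ k * dist (F t c e) (F t c y) := by
    intro y
    have hb := gAux_lip Pε F hmF ρ hρ0 hρ1 hcontract hintc hintH n f hmf hlip k hkn x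
      (Function.update x t (F t c y))
    have hzero : ∑ s ∈ Icc 1 (n - k - 1),
        dist (x s) (Function.update x t (F t c y) s) = 0 := by
      refine Finset.sum_eq_zero fun s hs => ?_
      rw [Finset.mem_Icc] at hs
      have hsj : s ≠ t := by omega
      rw [Function.update_of_ne hsj, dist_self]
    rw [hzero, zero_add, hnk, Function.update_self, hxt] at hb
    exact hb
  rw [hunf, hsplit]
  calc |∫ y, (gAux Pε F n f k x - gAux Pε F n f k (Function.update x t (F t c y))) ∂Pε|
      ≤ ∫ y, |gAux Pε F n f k x - gAux Pε F n f k (Function.update x t (F t c y))| ∂Pε := by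
        simpa [Real.norm_eq_abs] using norm_integral_le_integral_norm
          (fun y => gAux Pε F n f k x - gAux Pε F n f k (Function.update x t (F t c y)))
    _ ≤ ∫ y, Kgeom ρ k * dist (F t c e) (F t c y) ∂Pε := by
        refine integral_mono ?_ (hd.const_mul _) hptwise
        exact ((integrable_const _).sub hB).abs
    _ = Kgeom ρ k * ∫ y', dist (F t c e) (F t c y') ∂Pε := integral_const_mul _ _
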